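/- Suppose M ~ Bin(T, q₀) and conditionally on M = m, G ~ Bin(N, (1-p)^m), where q₀ = (1-p)^k. Then for any nonnegative integer s, the s-th falling moment of G equals C(N,s) · s! · (1 - q₀(1 - (1-p)^s))^T. -/

import Mathlib

open Finset

private lemma binom_sum (n : ℕ) (x : ℝ) :
    ∑ i ∈ Finset.range (n + 1), (n.choose i : ℝ) * x ^ i * (1 - x) ^ (n - i) = 1 := by
  have h : ∑ i ∈ Finset.range (n + 1), (n.choose i : ℝ) * x ^ i * (1 - x) ^ (n - i)
      = (x + (1 - x)) ^ n := by
    rw [add_pow]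
    exact Finset.sum_congr rfl fun i _ => by ring
  rw [h]
  norm_num

private lemma falling_moment_binom (N s : ℕ) (x : ℝ) :
    ∑ g ∈ Finset.range (N + 1),
      (N.choose g : ℝ) * x ^ g * (1 - x) ^ (N - g) * (g.descFactorial s : ℝ)
    = (N.choose s : ℝ) * (s.factorial : ℝ) * x ^ s := by
  by_cases hsN : s ≤ N
  · -- drop terms with g < s
    have hzero : ∀ g ∈ Finset.range s,
        (N.choose g : ℝ) * x ^ g * (1 - x) ^ (N - g) * (g.descFactorial s : ℝ) = 0 := by
      intro g hg
      rw [Finset.mem_range] at hg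
      rw [Nat.descFactorial_eq_zero_iff_lt.2 hg]
      simp
    have hsplit : Finset.range (N + 1) = Finset.range s ∪ Finset.Ico s (N + 1) := by
      rw [Finset.range_eq_Ico, Finset.range_eq_Ico, Finset.Ico_union_Ico_eq_Ico (Nat.zero_le _) (by omega)]
    rw [hsplit, Finset.sum_union (by
      simp [Finset.disjoint_left, Finset.mem_range, Finset.mem_Ico]; omega),
      Finset.sum_eq_zero hzero, zero_add,
      Finset.sum_Ico_eq_sum_range]
    have hNs : N + 1 - s = (N - s) + 1 := by omega
    rw [hNs]
    have key : ∀ j ∈ Finset.range (N - s + 1),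
        (N.choose (s + j) : ℝ) * x ^ (s + j) * (1 - x) ^ (N - (s + j)) *
          ((s + j).descFactorial s : ℝ)
        = (N.choose s : ℝ) * (s.factorial : ℝ) * x ^ s *
            (((N - s).choose j : ℝ) * x ^ j * (1 - x) ^ (N - s - j)) := by
      intro j hj
      rw [Finset.mem_range] at hj
      have hle : s + j ≤ N := by omega
      have hnat : N.choose (s + j) * (s + j).descFactorial s
          = N.choose s * s.factorial * (N - s).choose j := by
        rw [Nat.descFactorial_eq_factorial_mul_choose, ← Nat.mul_assoc,
          Nat.mul_comm (N.choose (s+j)) (s.factorial), Nat.mul_assoc,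
          Nat.choose_mul (n := N) (Nat.le_add_right s j), Nat.add_sub_cancel_left,
          ← Nat.mul_assoc, Nat.mul_comm (s.factorial)]
      have hcast : (N.choose (s + j) : ℝ) * ((s + j).descFactorial s : ℝ)
          = (N.choose s : ℝ) * (s.factorial : ℝ) * ((N - s).choose j : ℝ) := by
        exact_mod_cast congrArg (Nat.cast (R := ℝ)) hnat
      have hsub : N - (s + j) = N - s - j := by omega
      rw [hsub, pow_add]
      linear_combination x ^ s * x ^ j * (1 - x) ^ (N - s - j) * hcast
    rw [Finset.sum_congr rfl key, ← Finset.mul_sum, binom_sum (N - s) x, mul_one]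
  · push_neg at hsN
    rw [Nat.choose_eq_zero_of_lt hsN]
    simp only [Nat.cast_zero, zero_mul]
    apply Finset.sum_eq_zero
    intro g hg
    rw [Finset.mem_range] at hg
    rw [Nat.descFactorial_eq_zero_iff_lt.2 (by omega)]
    simp

/-- Falling moments of the mixed binomial count of intruding items: if
`M ~ Bin(T, q₀)` with `q₀ = (1-p)^k` and, conditionally on `M = m`,
`G ~ Bin(N, (1-p)^m)`, then `E[(G)_s] = C(N,s) · s! · (1 - q₀(1-(1-p)^s))^T`. -/
theorem intruding_falling_moment (T N k s : ℕ) (p : ℝ) (hp0 : 0 < p) (hp1 : p < 1) :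
    ∑ m ∈ Finset.range (T + 1),
      (T.choose m : ℝ) * ((1 - p) ^ k) ^ m * (1 - (1 - p) ^ k) ^ (T - m) *
        (∑ g ∈ Finset.range (N + 1),
          (N.choose g : ℝ) * ((1 - p) ^ m) ^ g * (1 - (1 - p) ^ m) ^ (N - g)
            * (g.descFactorial s : ℝ))
    = (N.choose s : ℝ) * (s.factorial : ℝ) * (1 - (1 - p) ^ k * (1 - (1 - p) ^ s)) ^ T := by
  have h1 : ∀ m ∈ Finset.range (T + 1),
      (T.choose m : ℝ) * ((1 - p) ^ k) ^ m * (1 - (1 - p) ^ k) ^ (T - m) *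
        (∑ g ∈ Finset.range (N + 1),
          (N.choose g : ℝ) * ((1 - p) ^ m) ^ g * (1 - (1 - p) ^ m) ^ (N - g)
            * (g.descFactorial s : ℝ))
      = (N.choose s : ℝ) * (s.factorial : ℝ) *
          ((T.choose m : ℝ) * ((1 - p) ^ k * (1 - p) ^ s) ^ m * (1 - (1 - p) ^ k) ^ (T - m)) := by
    intro m _
    rw [falling_moment_binom N s ((1 - p) ^ m)]
    rw [← pow_mul, ← pow_mul, Nat.mul_comm m s, pow_mul, mul_pow, ← pow_mul, ← pow_mul,
      Nat.mul_comm k m, pow_mul]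
    ring
  rw [Finset.sum_congr rfl h1, ← Finset.mul_sum]
  congr 1
  have h := add_pow ((1 - p) ^ k * (1 - p) ^ s) (1 - (1 - p) ^ k) T
  have heq : (1 - p) ^ k * (1 - p) ^ s + (1 - (1 - p) ^ k)
      = 1 - (1 - p) ^ k * (1 - (1 - p) ^ s) := by ring
  rw [heq] at h
  rw [h]
  exact Finset.sum_congr rfl fun i _ => by ring
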